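/- arXiv:0912.2499 — 2 statements merged into one kernel-verified Lean document; each statement's English description precedes it below -/
import Mathlib

section
/- (Resolvent bound.) Let N ≥ 1, let X be an arbitrary N×N complex matrix, and let p = a + bj be a quaternion with a, b ∈ ℂ and b ≠ 0. Then the 2N×2N matrix 𝐗 − 𝐩 is invertible, and its inverse satisfies ‖(𝐗 − 𝐩)⁻¹‖ ≤ 1/sqrt(x² + |b|²) ≤ 1/|b|, where x is the smallest singular value of X − a·I and ‖·‖ is the spectral norm. Moreover every 2×2 block ((𝐗 − 𝐩)⁻¹)_{ij} has spectral norm at most 1/|b|. -/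
open MeasureTheory ProbabilityTheory Matrix Filter Topology
open scoped ComplexConjugate

noncomputable section

/-- The spectral (operator) norm of a square complex matrix. -/
def specNorm {n : Type*} [Fintype n] [DecidableEq n] (M : Matrix n n ℂ) : ℝ :=
  ‖Matrix.toEuclideanCLM (𝕜 := ℂ) (n := n) M‖

/-- The smallest singular value of a square complex matrix. -/
def leastSingular {n : Type*} [Fintype n] [DecidableEq n] (M : Matrix n n ℂ) : ℝ :=
  ⨅ v : {v : EuclideanSpace ℂ n // ‖v‖ = 1},
    ‖Matrix.toEuclideanCLM (𝕜 := ℂ) (n := n) M v.1‖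

/-- The 2×2 matrix representation of the quaternion `a + b·j`, encoded as the pair `(a, b)`. -/
def qmat (p : ℂ × ℂ) : Matrix (Fin 2) (Fin 2) ℂ :=
  !![p.1, Complex.I * p.2; Complex.I * conj p.2, conj p.1]

/-- The quaternion norm `|a + b·j| = sqrt(|a|² + |b|²)`. -/
def qnorm (p : ℂ × ℂ) : ℝ := Real.sqrt (‖p.1‖ ^ 2 + ‖p.2‖ ^ 2)

/-- Quaternion multiplication: `(a + bj)(c + dj) = (ac − b·conj d) + (ad + b·conj c)·j`. -/
def qmul (p q : ℂ × ℂ) : ℂ × ℂ :=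
  (p.1 * q.1 - p.2 * conj q.2, p.1 * q.2 + p.2 * conj q.1)

/-- Quaternion inverse. -/
def qinv (p : ℂ × ℂ) : ℂ × ℂ :=
  (conj p.1 / ((‖p.1‖ ^ 2 + ‖p.2‖ ^ 2 : ℝ) : ℂ),
   -p.2 / ((‖p.1‖ ^ 2 + ‖p.2‖ ^ 2 : ℝ) : ℂ))

/-- The elementwise product of quaternions: `(a + bj)·(c + dj) = ac + bd·j`. -/
def qdot (p q : ℂ × ℂ) : ℂ × ℂ := (p.1 * q.1, p.2 * q.2)

/-- The `2N×2N` doubling of an `N×N` matrix `X`, whose `(i,j)`-th `2×2` block is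
`[[X i j, 0], [0, conj (X j i)]]`. -/
def dbl {N : ℕ} (X : Matrix (Fin N) (Fin N) ℂ) :
    Matrix (Fin N × Fin 2) (Fin N × Fin 2) ℂ :=
  Matrix.of fun r s =>
    if r.2 = 0 ∧ s.2 = 0 then X r.1 s.1
    else if r.2 = 1 ∧ s.2 = 1 then conj (X s.1 r.1) else 0

/-- The matrix `𝐪 ⊗ I_N` of a quaternion `q` acting on `2N×2N` matrices. -/
def qId {N : ℕ} (p : ℂ × ℂ) : Matrix (Fin N × Fin 2) (Fin N × Fin 2) ℂ :=
  Matrix.of fun r s => if r.1 = s.1 then qmat p r.2 s.2 else 0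

/-- The `2N×2N` matrix `𝐙𝐣 = (dbl Z) · (𝐣 ⊗ I_N)`, whose `(i,j)`-th `2×2` block is
`[[0, i·Z i j], [i·conj (Z j i), 0]]`. -/
def dblJ {N : ℕ} (Z : Matrix (Fin N) (Fin N) ℂ) :
    Matrix (Fin N × Fin 2) (Fin N × Fin 2) ℂ :=
  Matrix.of fun r s =>
    if r.2 = 0 ∧ s.2 = 1 then Complex.I * Z r.1 s.1
    else if r.2 = 1 ∧ s.2 = 0 then Complex.I * conj (Z s.1 r.1) else 0

/-- The `(i,j)`-th `2×2` block of a `2N×2N` matrix. -/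
def blk {N : ℕ} (M : Matrix (Fin N × Fin 2) (Fin N × Fin 2) ℂ) (i j : Fin N) :
    Matrix (Fin 2) (Fin 2) ℂ :=
  Matrix.of fun s t => M (i, s) (j, t)

/-- The quaternionic Green's function `𝒢(p; X) = α + βj`: with
`𝐌 = (1/N)·Σ_i ((dbl X − 𝐩 ⊗ I_N)⁻¹)_{ii}` the average of the diagonal `2×2` blocks of
the resolvent, `α = 𝐌 0 0` and `β = −i·(𝐌 0 1)`. -/
def qGreen {N : ℕ} (p : ℂ × ℂ) (X : Matrix (Fin N) (Fin N) ℂ) : ℂ × ℂ :=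
  let R : Matrix (Fin N × Fin 2) (Fin N × Fin 2) ℂ := (dbl X - qId p)⁻¹
  ((N : ℂ)⁻¹ * ∑ i : Fin N, R (i, 0) (i, 0),
   -Complex.I * ((N : ℂ)⁻¹ * ∑ i : Fin N, R (i, 0) (i, 1)))

/-- The normalised `N×N` random matrix `A_N` with entries `ξ i j / √N`. -/
def rmat {Ω : Type*} (ξ : ℕ → ℕ → Ω → ℂ) (N : ℕ) (ω : Ω) :
    Matrix (Fin N) (Fin N) ℂ :=
  Matrix.of fun i j : Fin N => ξ (i : ℕ) (j : ℕ) ω / ((Real.sqrt N : ℝ) : ℂ)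

/-- The entrywise expectation (Bochner integral) of a random matrix. -/
def Emat {Ω : Type*} [MeasurableSpace Ω] (μ : Measure Ω) {n m : Type*}
    (f : Ω → Matrix n m ℂ) : Matrix n m ℂ :=
  Matrix.of fun i j => ∫ ω, f ω i j ∂μ

/-- The entrywise expectation of a random quaternion. -/
def Equat {Ω : Type*} [MeasurableSpace Ω] (μ : Measure Ω) (f : Ω → ℂ × ℂ) : ℂ × ℂ :=
  (∫ ω, (f ω).1 ∂μ, ∫ ω, (f ω).2 ∂μ)

/-- The standard complex Gaussian measure on `ℂ`, with density `π⁻¹·exp(−|z|²)`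
with respect to Lebesgue measure. -/
def gaussianC : Measure ℂ :=
  MeasureTheory.volume.withDensity fun z =>
    ENNReal.ofReal (Real.exp (-(‖z‖) ^ 2) / Real.pi)

/-- `A` and `B` are independent `N×N` random matrices whose entries are i.i.d. standard
complex Gaussian: the joint law of all the entries of `A` and `B` is the corresponding
product of standard complex Gaussian measures. -/
structure IsGaussianPair {Ω : Type*} [MeasurableSpace Ω] (μ : Measure Ω) {N : ℕ}
    (A B : Ω → Matrix (Fin N) (Fin N) ℂ) : Prop where
  measA : ∀ i j, Measurable fun ω => A ω i j
  measB : ∀ i j, Measurable fun ω => B ω i j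
  law : Measure.map (fun ω =>
      Sum.elim (fun ij : Fin N × Fin N => A ω ij.1 ij.2)
        (fun ij : Fin N × Fin N => B ω ij.1 ij.2)) μ
    = Measure.pi fun _ : (Fin N × Fin N) ⊕ (Fin N × Fin N) => gaussianC

/-- Assumptions A1–A4 of the paper on the infinite array `ξ`:
(A1) zero mean, (A2) unit variance, (A3) third absolute moments bounded by `Cξ`,
(A4) the pairs `(ξ i j, ξ j i)` over unordered pairs `{i,j}` are jointly independent,
and `E[ξ i j · ξ j i] = τ` for `i ≠ j`. -/
structure IsIIDArray {Ω : Type*} [MeasurableSpace Ω] (μ : Measure Ω)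
    (ξ : ℕ → ℕ → Ω → ℂ) (Cξ τ : ℝ) : Prop where
  meas : ∀ i j, Measurable (ξ i j)
  int1 : ∀ i j, Integrable (ξ i j) μ
  mean_zero : ∀ i j, ∫ ω, ξ i j ω ∂μ = 0
  int2 : ∀ i j, Integrable (fun ω => ‖ξ i j ω‖ ^ 2) μ
  var_one : ∀ i j, ∫ ω, ‖ξ i j ω‖ ^ 2 ∂μ = 1
  int3 : ∀ i j, Integrable (fun ω => ‖ξ i j ω‖ ^ 3) μ
  third_moment : ∀ i j, ∫ ω, ‖ξ i j ω‖ ^ 3 ∂μ ≤ Cξ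
  indep : iIndepFun
      (fun p : {p : ℕ × ℕ // p.1 ≤ p.2} => fun ω =>
        (ξ p.1.1 p.1.2 ω, ξ p.1.2 p.1.1 ω)) μ
  int_cov : ∀ i j, Integrable (fun ω => ξ i j ω * ξ j i ω) μ
  cov : ∀ i j, i ≠ j → ∫ ω, ξ i j ω * ξ j i ω ∂μ = (τ : ℂ)

end

namespace ResolventAux
open Matrix

lemma clm_apply {n : Type*} [Fintype n] [DecidableEq n] (A : Matrix n n ℂ)
    (v : EuclideanSpace ℂ n) (i : n) :
    Matrix.toEuclideanCLM (𝕜 := ℂ) A v i = ∑ j, A i j * v j := rfl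

lemma norm_sq_eq {n : Type*} [Fintype n] (v : EuclideanSpace ℂ n) :
    ‖v‖ ^ 2 = ∑ i, ‖v i‖ ^ 2 := by
  rw [EuclideanSpace.norm_eq, Real.sq_sqrt (by positivity)]

lemma leastSingular_nonneg {n : Type*} [Fintype n] [DecidableEq n] (A : Matrix n n ℂ) :
    0 ≤ leastSingular A :=
  Real.iInf_nonneg fun _ => norm_nonneg _

lemma leastSingular_bdd {n : Type*} [Fintype n] [DecidableEq n] (A : Matrix n n ℂ) :
    BddBelow (Set.range fun v : {v : EuclideanSpace ℂ n // ‖v‖ = 1} =>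
      ‖Matrix.toEuclideanCLM (𝕜 := ℂ) A v.1‖) :=
  ⟨0, by rintro r ⟨v, rfl⟩; exact norm_nonneg _⟩

lemma leastSingular_mul_le {n : Type*} [Fintype n] [DecidableEq n] (A : Matrix n n ℂ)
    (v : EuclideanSpace ℂ n) :
    leastSingular A * ‖v‖ ≤ ‖Matrix.toEuclideanCLM (𝕜 := ℂ) A v‖ := by
  rcases eq_or_ne v 0 with rfl | hv
  · simp
  · have hnv : (0:ℝ) < ‖v‖ := norm_pos_iff.2 hv
    have h1 : ‖((‖v‖⁻¹ : ℝ) : ℂ) • v‖ = 1 := by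
      rw [norm_smul]
      simp [abs_of_pos (inv_pos.2 hnv), inv_mul_cancel₀ hnv.ne']
    have h2 := ciInf_le (leastSingular_bdd A) (⟨((‖v‖⁻¹ : ℝ) : ℂ) • v, h1⟩ :
      {v : EuclideanSpace ℂ n // ‖v‖ = 1})
    have h3 : ‖Matrix.toEuclideanCLM (𝕜 := ℂ) A (((‖v‖⁻¹ : ℝ) : ℂ) • v)‖
        = ‖v‖⁻¹ * ‖Matrix.toEuclideanCLM (𝕜 := ℂ) A v‖ := by
      rw [_root_.map_smul, norm_smul]
      simp [abs_of_pos (inv_pos.2 hnv)]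
    rw [h3] at h2
    have := mul_le_mul_of_nonneg_right h2 hnv.le
    calc leastSingular A * ‖v‖ ≤ ‖v‖⁻¹ * ‖Matrix.toEuclideanCLM (𝕜 := ℂ) A v‖ * ‖v‖ := this
      _ = ‖Matrix.toEuclideanCLM (𝕜 := ℂ) A v‖ := by field_simp

lemma toEuclideanCLM_conjTranspose {n : Type*} [Fintype n] [DecidableEq n]
    (A : Matrix n n ℂ) :
    Matrix.toEuclideanCLM (𝕜 := ℂ) Aᴴ
      = ContinuousLinearMap.adjoint (Matrix.toEuclideanCLM (𝕜 := ℂ) A) := by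
  rw [← ContinuousLinearMap.star_eq_adjoint, ← map_star]; rfl

lemma leastSingular_mul_le_conjTranspose {n : Type*} [Fintype n] [DecidableEq n]
    (A : Matrix n n ℂ) (u : EuclideanSpace ℂ n) :
    leastSingular A * ‖u‖ ≤ ‖Matrix.toEuclideanCLM (𝕜 := ℂ) Aᴴ u‖ := by
  set T := Matrix.toEuclideanCLM (𝕜 := ℂ) A with hT
  rcases (leastSingular_nonneg A).eq_or_lt with hx | hx
  · rw [← hx, zero_mul]; exact norm_nonneg _
  rcases eq_or_ne u 0 with rfl | hu
  · simp
  have hnu : (0:ℝ) < ‖u‖ := norm_pos_iff.2 hu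
  have hinj : Function.Injective T := by
    intro v w h
    have h2 := leastSingular_mul_le A (v - w)
    rw [map_sub, h, sub_self, norm_zero] at h2
    have h3 : ‖v - w‖ ≤ 0 := by nlinarith [norm_nonneg (v - w)]
    have h4 : ‖v - w‖ = 0 := le_antisymm h3 (norm_nonneg _)
    exact sub_eq_zero.mp (norm_eq_zero.mp h4)
  have hsurj : Function.Surjective T :=
    LinearMap.injective_iff_surjective.mp hinj
  obtain ⟨v, hv⟩ := hsurj u
  have hvu : leastSingular A * ‖v‖ ≤ ‖u‖ := by
    have h := leastSingular_mul_le A v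
    rwa [← hT, hv] at h
  have hadj : (inner ℂ (T v) u : ℂ) = inner ℂ v (Matrix.toEuclideanCLM (𝕜 := ℂ) Aᴴ u) := by
    rw [toEuclideanCLM_conjTranspose, ContinuousLinearMap.adjoint_inner_right]
  have hcs : ‖(inner ℂ v (Matrix.toEuclideanCLM (𝕜 := ℂ) Aᴴ u) : ℂ)‖
      ≤ ‖v‖ * ‖Matrix.toEuclideanCLM (𝕜 := ℂ) Aᴴ u‖ := norm_inner_le_norm _ _
  have hself : ‖(inner ℂ (T v) u : ℂ)‖ = ‖u‖ ^ 2 := by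
    rw [hv, inner_self_eq_norm_sq_to_K]
    simp [Complex.norm_real, abs_of_nonneg (norm_nonneg u), sq_abs]
  have key : ‖u‖ ^ 2 ≤ ‖v‖ * ‖Matrix.toEuclideanCLM (𝕜 := ℂ) Aᴴ u‖ := by
    rw [← hself, hadj]; exact hcs
  have hv0 : 0 ≤ ‖v‖ := norm_nonneg _
  have hAu : 0 ≤ ‖Matrix.toEuclideanCLM (𝕜 := ℂ) Aᴴ u‖ := norm_nonneg _
  nlinarith [mul_le_mul_of_nonneg_right hvu hAu]


lemma specNorm_blk_le {N : ℕ} (R : Matrix (Fin N × Fin 2) (Fin N × Fin 2) ℂ) (i j : Fin N) :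
    specNorm (blk R i j) ≤ specNorm R := by
  classical
  rw [specNorm, specNorm]
  refine ContinuousLinearMap.opNorm_le_bound _ (norm_nonneg _) fun u => ?_
  set w : EuclideanSpace ℂ (Fin N × Fin 2) :=
    WithLp.toLp 2 (fun p : Fin N × Fin 2 => if p.1 = j then u p.2 else 0) with hwdef
  have hw : ‖w‖ = ‖u‖ := by
    have h1 : ‖w‖ ^ 2 = ‖u‖ ^ 2 := by
      rw [norm_sq_eq, norm_sq_eq, Fintype.sum_prod_type]
      rw [Finset.sum_eq_single j]
      · simp [hwdef]
      · intro b _ hb; simp [hwdef, hb]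
      · intro h; exact absurd (Finset.mem_univ j) h
    have := congrArg Real.sqrt h1
    rwa [Real.sqrt_sq (norm_nonneg _), Real.sqrt_sq (norm_nonneg _)] at this
  have happ : ∀ s : Fin 2, Matrix.toEuclideanCLM (𝕜 := ℂ) (blk R i j) u s
      = Matrix.toEuclideanCLM (𝕜 := ℂ) R w (i, s) := by
    intro s
    rw [clm_apply, clm_apply, Fintype.sum_prod_type]
    rw [Finset.sum_eq_single j]
    · simp [hwdef, blk]
    · intro b _ hb; simp [hwdef, hb]
    · intro h; exact absurd (Finset.mem_univ j) h
  have h2 : ‖Matrix.toEuclideanCLM (𝕜 := ℂ) (blk R i j) u‖ ^ 2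
      ≤ ‖Matrix.toEuclideanCLM (𝕜 := ℂ) R w‖ ^ 2 := by
    rw [norm_sq_eq, norm_sq_eq, Fintype.sum_prod_type]
    have h3 : (∑ s : Fin 2, ‖Matrix.toEuclideanCLM (𝕜 := ℂ) (blk R i j) u s‖ ^ 2)
        = ∑ s : Fin 2, ‖Matrix.toEuclideanCLM (𝕜 := ℂ) R w (i, s)‖ ^ 2 := by
      refine Finset.sum_congr rfl fun s _ => by rw [happ]
    rw [h3]
    exact Finset.single_le_sum
      (f := fun i' => ∑ s : Fin 2, ‖Matrix.toEuclideanCLM (𝕜 := ℂ) R w (i', s)‖ ^ 2)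
      (fun i' _ => by positivity) (Finset.mem_univ i)
  have h4 : ‖Matrix.toEuclideanCLM (𝕜 := ℂ) (blk R i j) u‖
      ≤ ‖Matrix.toEuclideanCLM (𝕜 := ℂ) R w‖ := by
    have := Real.sqrt_le_sqrt h2
    rwa [Real.sqrt_sq (norm_nonneg _), Real.sqrt_sq (norm_nonneg _)] at this
  calc ‖Matrix.toEuclideanCLM (𝕜 := ℂ) (blk R i j) u‖
      ≤ ‖Matrix.toEuclideanCLM (𝕜 := ℂ) R w‖ := h4
    _ ≤ ‖Matrix.toEuclideanCLM (𝕜 := ℂ) R‖ * ‖w‖ := ContinuousLinearMap.le_opNorm _ _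
    _ = ‖Matrix.toEuclideanCLM (𝕜 := ℂ) R‖ * ‖u‖ := by rw [hw]

lemma cross_re (b w : ℂ) :
    (Complex.I * b * w).re + (Complex.I * (starRingEnd ℂ) b * (starRingEnd ℂ) w).re = 0 := by
  simp only [Complex.mul_re, Complex.mul_im, Complex.I_re, Complex.I_im, Complex.conj_re,
    Complex.conj_im]
  ring

end ResolventAux

/-- **The resolvent bound.** For any `N×N` complex matrix `X` and quaternion `p = a + bj`
with `b ≠ 0`: `𝐗 − 𝐩` is invertible, `‖(𝐗 − 𝐩)⁻¹‖ ≤ 1/sqrt(x² + |b|²) ≤ 1/|b|` where `x`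
is the smallest singular value of `X − a·I`, and every `2×2` block of `(𝐗 − 𝐩)⁻¹` has
spectral norm at most `1/|b|`. -/

theorem resolvent_bound
    (N : ℕ) (hN : 1 ≤ N) (X : Matrix (Fin N) (Fin N) ℂ)
    (a b : ℂ) (hb : b ≠ 0) :
    IsUnit (dbl X - qId (a, b)) ∧
    specNorm ((dbl X - qId (a, b))⁻¹)
      ≤ 1 / Real.sqrt (leastSingular (X - a • 1) ^ 2 + ‖b‖ ^ 2) ∧
    1 / Real.sqrt (leastSingular (X - a • 1) ^ 2 + ‖b‖ ^ 2)
      ≤ 1 / ‖b‖ ∧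
    ∀ i j : Fin N,
      specNorm (blk ((dbl X - qId (a, b))⁻¹) i j) ≤ 1 / ‖b‖ := by
  classical
  set Y : Matrix (Fin N) (Fin N) ℂ := X - a • 1 with hYdef
  set M : Matrix (Fin N × Fin 2) (Fin N × Fin 2) ℂ := dbl X - qId (a, b) with hMdef
  set x : ℝ := leastSingular Y with hxdef
  set c : ℝ := Real.sqrt (x ^ 2 + ‖b‖ ^ 2) with hcdef
  have hb0 : 0 < ‖b‖ := norm_pos_iff.2 hb
  have hx0 : 0 ≤ x := ResolventAux.leastSingular_nonneg Y
  have hc0 : 0 < c := Real.sqrt_pos.2 (by positivity)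
  have hcb : ‖b‖ ≤ c := by
    rw [hcdef]
    exact (Real.le_sqrt' hb0).2 (by nlinarith)
  have hM00 : ∀ i j : Fin N, M (i, 0) (j, 0) = Y i j := by
    intro i j
    simp only [hMdef, hYdef, Matrix.sub_apply, dbl, qId, qmat, Matrix.of_apply,
      Matrix.smul_apply, Matrix.one_apply, smul_eq_mul]
    rcases eq_or_ne i j with h | h
    · subst h; simp
    · simp [h, h.symm]
  have hM01 : ∀ i j : Fin N, M (i, 0) (j, 1) = if i = j then -(Complex.I * b) else 0 := by
    intro i j
    simp only [hMdef, Matrix.sub_apply, dbl, qId, qmat, Matrix.of_apply]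
    rcases eq_or_ne i j with h | h
    · subst h; simp
    · simp [h, h.symm]
  have hM10 : ∀ i j : Fin N,
      M (i, 1) (j, 0) = if i = j then -(Complex.I * (starRingEnd ℂ) b) else 0 := by
    intro i j
    simp only [hMdef, Matrix.sub_apply, dbl, qId, qmat, Matrix.of_apply]
    rcases eq_or_ne i j with h | h
    · subst h; simp
    · simp [h, h.symm]
  have hM11 : ∀ i j : Fin N, M (i, 1) (j, 1) = Yᴴ i j := by
    intro i j
    simp only [hMdef, hYdef, Matrix.sub_apply, dbl, qId, qmat, Matrix.of_apply,
      Matrix.conjTranspose_apply, Matrix.smul_apply, Matrix.one_apply, smul_eq_mul]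
    rcases eq_or_ne i j with h | h
    · subst h; simp
    · simp [h, h.symm]
  have key : ∀ v : EuclideanSpace ℂ (Fin N × Fin 2),
      c * ‖v‖ ≤ ‖Matrix.toEuclideanCLM (𝕜 := ℂ) M v‖ := by
    intro v
    set v0 : EuclideanSpace ℂ (Fin N) := WithLp.toLp 2 (fun i => v (i, 0)) with hv0
    set v1 : EuclideanSpace ℂ (Fin N) := WithLp.toLp 2 (fun i => v (i, 1)) with hv1
    have e0 : ∀ i : Fin N,
        Matrix.toEuclideanCLM (𝕜 := ℂ) M v (i, 0)
          = (Matrix.toEuclideanCLM (𝕜 := ℂ) Y v0 - (Complex.I * b) • v1) i := by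
      intro i
      have lhs : Matrix.toEuclideanCLM (𝕜 := ℂ) M v (i, 0)
          = ∑ j : Fin N, (M (i, 0) (j, 0) * v (j, 0) + M (i, 0) (j, 1) * v (j, 1)) := by
        rw [ResolventAux.clm_apply, Fintype.sum_prod_type]
        exact Finset.sum_congr rfl fun j _ => by rw [Fin.sum_univ_two]
      rw [lhs]
      have step : ∀ j : Fin N, M (i, 0) (j, 0) * v (j, 0) + M (i, 0) (j, 1) * v (j, 1)
          = Y i j * v0 j + (if i = j then -(Complex.I * b) * v1 j else 0) := by
        intro j
        rw [hM00, hM01]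
        rcases eq_or_ne i j with h | h
        · subst h; simp [hv0, hv1]
        · simp [h, h.symm, hv0]
      rw [Finset.sum_congr rfl fun j _ => step j, Finset.sum_add_distrib,
        Finset.sum_ite_eq Finset.univ i (fun j => -(Complex.I * b) * v1 j)]
      simp only [Finset.mem_univ, if_true, PiLp.sub_apply, PiLp.smul_apply,
        ResolventAux.clm_apply, smul_eq_mul]
      ring
    have e1 : ∀ i : Fin N,
        Matrix.toEuclideanCLM (𝕜 := ℂ) M v (i, 1)
          = (Matrix.toEuclideanCLM (𝕜 := ℂ) Yᴴ v1 - (Complex.I * (starRingEnd ℂ) b) • v0) i := by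
      intro i
      have lhs : Matrix.toEuclideanCLM (𝕜 := ℂ) M v (i, 1)
          = ∑ j : Fin N, (M (i, 1) (j, 0) * v (j, 0) + M (i, 1) (j, 1) * v (j, 1)) := by
        rw [ResolventAux.clm_apply, Fintype.sum_prod_type]
        exact Finset.sum_congr rfl fun j _ => by rw [Fin.sum_univ_two]
      rw [lhs]
      have step : ∀ j : Fin N, M (i, 1) (j, 0) * v (j, 0) + M (i, 1) (j, 1) * v (j, 1)
          = Yᴴ i j * v1 j + (if i = j then -(Complex.I * (starRingEnd ℂ) b) * v0 j else 0) := by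
        intro j
        rw [hM10, hM11]
        rcases eq_or_ne i j with h | h
        · subst h; simp; ring
        · simp [h, h.symm, hv1]
      rw [Finset.sum_congr rfl fun j _ => step j, Finset.sum_add_distrib,
        Finset.sum_ite_eq Finset.univ i (fun j => -(Complex.I * (starRingEnd ℂ) b) * v0 j)]
      simp only [Finset.mem_univ, if_true, PiLp.sub_apply, PiLp.smul_apply,
        ResolventAux.clm_apply, smul_eq_mul]
      ring
    set y0 : EuclideanSpace ℂ (Fin N) := Matrix.toEuclideanCLM (𝕜 := ℂ) Y v0 with hy0
    set y1 : EuclideanSpace ℂ (Fin N) := Matrix.toEuclideanCLM (𝕜 := ℂ) Yᴴ v1 with hy1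
    have hnorm : ‖Matrix.toEuclideanCLM (𝕜 := ℂ) M v‖ ^ 2
        = ‖y0 - (Complex.I * b) • v1‖ ^ 2
          + ‖y1 - (Complex.I * (starRingEnd ℂ) b) • v0‖ ^ 2 := by
      rw [ResolventAux.norm_sq_eq, ResolventAux.norm_sq_eq, ResolventAux.norm_sq_eq,
        Fintype.sum_prod_type]
      rw [Finset.sum_congr rfl fun i _ => Fin.sum_univ_two
        (fun s => ‖Matrix.toEuclideanCLM (𝕜 := ℂ) M v (i, s)‖ ^ 2)]
      rw [Finset.sum_add_distrib]
      congr 1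
      · exact Finset.sum_congr rfl fun i _ => by rw [e0]
      · exact Finset.sum_congr rfl fun i _ => by rw [e1]
    set w : ℂ := inner ℂ y0 v1 with hw
    have exp0 : ‖y0 - (Complex.I * b) • v1‖ ^ 2
        = ‖y0‖ ^ 2 + ‖b‖ ^ 2 * ‖v1‖ ^ 2 - 2 * (Complex.I * b * w).re := by
      rw [norm_sub_sq (𝕜 := ℂ), inner_smul_right, norm_smul]
      simp only [RCLike.re_to_complex, norm_mul, Complex.norm_I, one_mul,
        mul_pow, hw]
      ring
    have hw1 : (inner ℂ y1 v0 : ℂ) = (starRingEnd ℂ) w := by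
      have h1 : (inner ℂ v0 y1 : ℂ) = w := by
        rw [hy1, ResolventAux.toEuclideanCLM_conjTranspose,
          ContinuousLinearMap.adjoint_inner_right, hw, hy0]
      rw [← inner_conj_symm, h1]
    have exp1 : ‖y1 - (Complex.I * (starRingEnd ℂ) b) • v0‖ ^ 2
        = ‖y1‖ ^ 2 + ‖b‖ ^ 2 * ‖v0‖ ^ 2
          - 2 * (Complex.I * (starRingEnd ℂ) b * (starRingEnd ℂ) w).re := by
      rw [norm_sub_sq (𝕜 := ℂ), inner_smul_right, norm_smul, hw1]
      simp only [RCLike.re_to_complex, norm_mul, Complex.norm_I, one_mul,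
        mul_pow, Complex.norm_conj]
      ring
    have hn2 : ‖Matrix.toEuclideanCLM (𝕜 := ℂ) M v‖ ^ 2
        = ‖y0‖ ^ 2 + ‖y1‖ ^ 2 + ‖b‖ ^ 2 * (‖v0‖ ^ 2 + ‖v1‖ ^ 2) := by
      rw [hnorm, exp0, exp1]
      have := ResolventAux.cross_re b w
      linarith
    have hvs : ‖v‖ ^ 2 = ‖v0‖ ^ 2 + ‖v1‖ ^ 2 := by
      rw [ResolventAux.norm_sq_eq, ResolventAux.norm_sq_eq, ResolventAux.norm_sq_eq,
        Fintype.sum_prod_type]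
      rw [Finset.sum_congr rfl fun i _ => Fin.sum_univ_two (fun s => ‖v (i, s)‖ ^ 2)]
      rw [Finset.sum_add_distrib]
      try simp [hv0, hv1]
    have q1 : (x * ‖v0‖) ^ 2 ≤ ‖y0‖ ^ 2 :=
      pow_le_pow_left₀ (mul_nonneg hx0 (norm_nonneg _))
        (ResolventAux.leastSingular_mul_le Y v0) 2
    have q2 : (x * ‖v1‖) ^ 2 ≤ ‖y1‖ ^ 2 :=
      pow_le_pow_left₀ (mul_nonneg hx0 (norm_nonneg _))
        (ResolventAux.leastSingular_mul_le_conjTranspose Y v1) 2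
    have hfin : (c * ‖v‖) ^ 2 ≤ ‖Matrix.toEuclideanCLM (𝕜 := ℂ) M v‖ ^ 2 := by
      have hc2 : c ^ 2 = x ^ 2 + ‖b‖ ^ 2 := by
        rw [hcdef]; exact Real.sq_sqrt (by positivity)
      rw [mul_pow, hc2, hn2, hvs]
      rw [mul_pow] at q1 q2
      calc (x ^ 2 + ‖b‖ ^ 2) * (‖v0‖ ^ 2 + ‖v1‖ ^ 2)
          = x ^ 2 * ‖v0‖ ^ 2 + x ^ 2 * ‖v1‖ ^ 2
            + ‖b‖ ^ 2 * (‖v0‖ ^ 2 + ‖v1‖ ^ 2) := by ring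
        _ ≤ ‖y0‖ ^ 2 + ‖y1‖ ^ 2 + ‖b‖ ^ 2 * (‖v0‖ ^ 2 + ‖v1‖ ^ 2) :=
            add_le_add (add_le_add q1 q2) le_rfl
    have hs := Real.sqrt_le_sqrt hfin
    rwa [Real.sqrt_sq (mul_nonneg hc0.le (norm_nonneg _)),
      Real.sqrt_sq (norm_nonneg _)] at hs
  have hdet : M.det ≠ 0 := by
    intro h
    obtain ⟨v, hvne, hv⟩ := (Matrix.exists_mulVec_eq_zero_iff).2 h
    set ve : EuclideanSpace ℂ (Fin N × Fin 2) := WithLp.toLp 2 v with hve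
    have h1 : Matrix.toEuclideanCLM (𝕜 := ℂ) M ve = 0 := by
      ext p
      rw [ResolventAux.clm_apply]
      have h2 := congrFun hv p
      simpa [hve, Matrix.mulVec, dotProduct] using h2
    have h2 := key ve
    rw [h1, norm_zero] at h2
    have h3 : ‖ve‖ ≤ 0 := by
      have h2' : c * ‖ve‖ ≤ c * 0 := by rwa [mul_zero]
      exact le_of_mul_le_mul_left h2' hc0
    have h4 : ve = 0 := norm_eq_zero.mp (le_antisymm h3 (norm_nonneg _))
    exact hvne (by simpa [hve] using congrArg WithLp.ofLp h4)
  have hUdet : IsUnit M.det := Ne.isUnit hdet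
  have hUnit : IsUnit M := (Matrix.isUnit_iff_isUnit_det M).2 hUdet
  have hMMinv : M * M⁻¹ = 1 := Matrix.mul_nonsing_inv M hUdet
  have hTinv : ∀ w : EuclideanSpace ℂ (Fin N × Fin 2),
      Matrix.toEuclideanCLM (𝕜 := ℂ) M (Matrix.toEuclideanCLM (𝕜 := ℂ) M⁻¹ w) = w := by
    intro w
    have h1 : Matrix.toEuclideanCLM (𝕜 := ℂ) M * Matrix.toEuclideanCLM (𝕜 := ℂ) M⁻¹ = 1 := by
      rw [← _root_.map_mul, hMMinv, _root_.map_one]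
    calc Matrix.toEuclideanCLM (𝕜 := ℂ) M (Matrix.toEuclideanCLM (𝕜 := ℂ) M⁻¹ w)
        = (Matrix.toEuclideanCLM (𝕜 := ℂ) M * Matrix.toEuclideanCLM (𝕜 := ℂ) M⁻¹) w := rfl
      _ = w := by rw [h1]; rfl
  have hspec : specNorm M⁻¹ ≤ 1 / c := by
    rw [specNorm]
    refine ContinuousLinearMap.opNorm_le_bound _ (by positivity) fun u => ?_
    have h2 := key (Matrix.toEuclideanCLM (𝕜 := ℂ) M⁻¹ u)
    rw [hTinv u] at h2
    rw [one_div, inv_mul_eq_div, le_div_iff₀ hc0, mul_comm]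
    exact h2
  have hcc : 1 / c ≤ 1 / ‖b‖ := one_div_le_one_div_of_le hb0 hcb
  exact ⟨hUnit, hspec, hcc, fun i j =>
    le_trans (ResolventAux.specNorm_blk_le M⁻¹ i j) (le_trans hspec hcc)⟩
end

section
/- Let N ≥ 1, let X be an arbitrary N×N complex matrix, and let p = a + bj be a quaternion with b ≠ 0. Then the quaternionic Green's function is well defined (𝐗 − 𝐩 is invertible) and satisfies the bound |𝒢(p; X)| ≤ 1/|b|, where |·| denotes the quaternion norm. -/
open MeasureTheory ProbabilityTheory Matrix Filter Topology
open scoped ComplexConjugate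

lemma qg_id {N : ℕ} (X : Matrix (Fin N) (Fin N) ℂ) (p : ℂ × ℂ) :
    ((dbl X - qId p)ᵀ)ᴴ * (dbl X - qId p)ᵀ
      = ((dbl X - qId (p.1, 0))ᵀ)ᴴ * (dbl X - qId (p.1, 0))ᵀ
        + ((Complex.normSq p.2 : ℝ) : ℂ) • 1 := by
  ext ⟨i, s⟩ ⟨j, t⟩
  simp only [Matrix.mul_apply, Matrix.conjTranspose_apply, Matrix.transpose_apply,
    Matrix.sub_apply, Matrix.add_apply, Matrix.smul_apply, Matrix.one_apply,
    Fintype.sum_prod_type_right, Fin.sum_univ_two, dbl, qId, qmat, Matrix.of_apply]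
  fin_cases s <;> fin_cases t <;>
    simp only [Prod.ext_iff, Matrix.cons_val_zero, Matrix.cons_val_one, Matrix.cons_val',
      Matrix.cons_val_fin_one, Matrix.empty_val', Matrix.head_cons, Matrix.head_fin_const,
      map_sub, _root_.map_mul, Complex.conj_I, apply_ite (⇑(starRingEnd ℂ)), map_zero,
      sub_mul, mul_sub, ite_mul, mul_ite, zero_mul, mul_zero, neg_mul, mul_neg,
      zero_sub, sub_zero, neg_neg, Finset.sum_sub_distrib, Finset.sum_neg_distrib,
      Finset.sum_ite_eq, Finset.mem_univ, if_true, ite_self, Finset.sum_const_zero] <;>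
  · by_cases h : i = j <;>
      simp [h, eq_comm, apply_ite (⇑(starRingEnd ℂ)), Complex.conj_I,
        ite_mul, mul_ite, neg_mul, mul_neg, Finset.sum_ite_eq,
        ← Complex.mul_conj, ← Complex.mul_conj'] <;>
      (try ring) <;> (try simp only [Complex.I_sq]) <;> (try ring)

lemma qg_dot (n : Type*) [Fintype n] (u : n → ℂ) :
    star u ⬝ᵥ u = ((∑ i, Complex.normSq (u i) : ℝ) : ℂ) := by
  simp [dotProduct, Complex.normSq_eq_conj_mul_self]

lemma qg_lower {n : Type*} [Fintype n] [DecidableEq n] (A B : Matrix n n ℂ) (c : ℝ)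
    (hc : 0 < c) (h : Aᴴ * A = Bᴴ * B + ((c : ℂ)) • 1) :
    IsUnit A ∧ ∀ w : n → ℂ,
      ∑ i, Complex.normSq ((A⁻¹ *ᵥ w) i) ≤ c⁻¹ * ∑ i, Complex.normSq (w i) := by
  have key : ∀ v : n → ℂ,
      c * ∑ i, Complex.normSq (v i) ≤ ∑ i, Complex.normSq ((A *ᵥ v) i) := by
    intro v
    have e1 : star (A *ᵥ v) ⬝ᵥ (A *ᵥ v) = star v ⬝ᵥ ((Aᴴ * A) *ᵥ v) := by
      rw [star_mulVec, ← Matrix.mulVec_mulVec, dotProduct_mulVec, Matrix.vecMul_vecMul,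
        ← dotProduct_mulVec, Matrix.mulVec_mulVec]
    rw [h] at e1
    have e2 : ((Bᴴ * B + (c : ℂ) • 1) *ᵥ v) = Bᴴ *ᵥ (B *ᵥ v) + (c : ℂ) • v := by
      rw [Matrix.add_mulVec, Matrix.mulVec_mulVec, Matrix.smul_mulVec, Matrix.one_mulVec]
    rw [e2, dotProduct_add, dotProduct_smul] at e1
    have e3 : star v ⬝ᵥ (Bᴴ *ᵥ (B *ᵥ v)) = star (B *ᵥ v) ⬝ᵥ (B *ᵥ v) := by
      rw [star_mulVec, dotProduct_mulVec]
    rw [e3, qg_dot, qg_dot, qg_dot] at e1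
    have e4 : (∑ i, Complex.normSq ((A *ᵥ v) i) : ℝ)
        = (∑ i, Complex.normSq ((B *ᵥ v) i)) + c * ∑ i, Complex.normSq (v i) := by
      have := e1
      rw [smul_eq_mul, ← Complex.ofReal_mul, ← Complex.ofReal_add] at this
      exact_mod_cast this
    rw [e4]
    have : 0 ≤ ∑ i, Complex.normSq ((B *ᵥ v) i) :=
      Finset.sum_nonneg fun i _ => Complex.normSq_nonneg _
    linarith
  have hdet : A.det ≠ 0 := by
    intro hd
    obtain ⟨v, hv, hAv⟩ := (Matrix.exists_mulVec_eq_zero_iff).2 hd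
    have := key v
    rw [hAv] at this
    simp only [Pi.zero_apply, Complex.normSq_zero, Finset.sum_const, smul_zero] at this
    have hz : ∑ i, Complex.normSq (v i) ≤ 0 := by
      nlinarith [this]
    have : ∀ i, Complex.normSq (v i) = 0 := by
      intro i
      have h1 : Complex.normSq (v i) ≤ 0 := by
        have := Finset.single_le_sum (f := fun i => Complex.normSq (v i))
          (fun i _ => Complex.normSq_nonneg _) (Finset.mem_univ i)
        linarith
      exact le_antisymm h1 (Complex.normSq_nonneg _)
    exact hv (funext fun i => Complex.normSq_eq_zero.1 (this i))
  have hA : IsUnit A := (Matrix.isUnit_iff_isUnit_det A).2 (isUnit_iff_ne_zero.2 hdet)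
  refine ⟨hA, fun w => ?_⟩
  have hAinv : A *ᵥ (A⁻¹ *ᵥ w) = w := by
    rw [Matrix.mulVec_mulVec, Matrix.mul_nonsing_inv A (isUnit_iff_ne_zero.2 hdet), Matrix.one_mulVec]
  have := key (A⁻¹ *ᵥ w)
  rw [hAinv] at this
  rw [← le_div_iff₀' hc] at this
  calc ∑ i, Complex.normSq ((A⁻¹ *ᵥ w) i) ≤ (∑ i, Complex.normSq (w i)) / c := this
    _ = c⁻¹ * ∑ i, Complex.normSq (w i) := by ring


set_option maxHeartbeats 1000000 in
/-- For a quaternion `p = a + bj` with `b ≠ 0`, the quaternionic Green's function is well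
defined (`𝐗 − 𝐩` is invertible) and satisfies `|𝒢(p; X)| ≤ 1/|b|`. -/
theorem qgreen_bound
    (N : ℕ) (hN : 1 ≤ N) (X : Matrix (Fin N) (Fin N) ℂ)
    (p : ℂ × ℂ) (hb : p.2 ≠ 0) :
    IsUnit (dbl X - qId p) ∧ qnorm (qGreen p X) ≤ 1 / ‖p.2‖ := by

  set M := dbl X - qId p with hM
  set K := dbl X - qId (p.1, 0) with hK
  set c := Complex.normSq p.2 with hc
  have hcpos : 0 < c := Complex.normSq_pos.2 hb
  obtain ⟨hU, hbound⟩ := qg_lower (Mᵀ) (Kᵀ) c hcpos (qg_id X p)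
  have hdet : M.det ≠ 0 := by
    have := (Matrix.isUnit_iff_isUnit_det _).1 hU
    rw [Matrix.det_transpose] at this
    exact isUnit_iff_ne_zero.1 this
  have hUM : IsUnit M := (Matrix.isUnit_iff_isUnit_det _).2 (isUnit_iff_ne_zero.2 hdet)
  refine ⟨hUM, ?_⟩
  set R := M⁻¹ with hR
  -- per-row bound
  have row : ∀ i : Fin N,
      Complex.normSq (R (i, 0) (i, 0)) + Complex.normSq (R (i, 0) (i, 1)) ≤ c⁻¹ := by
    intro i
    set e : Fin N × Fin 2 → ℂ := Pi.single ((i, 0) : Fin N × Fin 2) (1 : ℂ) with he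
    have h1 := hbound e
    have h2 : (Mᵀ)⁻¹ *ᵥ e = fun s => R (i, 0) s := by
      rw [he, ← Matrix.transpose_nonsing_inv, Matrix.mulVec_single]
      funext s
      simp [Matrix.transpose_apply, hR]
    rw [h2] at h1
    have h3 : ∑ s : Fin N × Fin 2, Complex.normSq (e s) = 1 := by
      rw [Fintype.sum_eq_single ((i, 0) : Fin N × Fin 2) ?_]
      · simp [he]
      · intro s hs
        rw [he, Pi.single_eq_of_ne hs, Complex.normSq_zero]
    rw [h3, mul_one] at h1
    refine le_trans ?_ h1
    have h4 : ∑ s : Fin N × Fin 2, Complex.normSq (R (i, 0) s)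
        = ∑ k : Fin N, (Complex.normSq (R (i, 0) (k, 0)) + Complex.normSq (R (i, 0) (k, 1))) := by
      rw [Fintype.sum_prod_type]
      exact Finset.sum_congr rfl fun k _ => by rw [Fin.sum_univ_two]
    rw [h4]
    exact Finset.single_le_sum
      (f := fun k => Complex.normSq (R (i, 0) (k, 0)) + Complex.normSq (R (i, 0) (k, 1)))
      (fun k _ => add_nonneg (Complex.normSq_nonneg _) (Complex.normSq_nonneg _))
      (Finset.mem_univ i)
  -- Euclidean bundling
  set g : Fin N → EuclideanSpace ℂ (Fin 2) := fun i =>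
    (WithLp.equiv 2 (Fin 2 → ℂ)).symm ![R (i, 0) (i, 0), R (i, 0) (i, 1)] with hg
  have hgnorm : ∀ i, ‖g i‖ ≤ 1 / ‖p.2‖ := by
    intro i
    rw [EuclideanSpace.norm_eq]
    have : ∑ s : Fin 2, ‖g i s‖ ^ 2
        = Complex.normSq (R (i, 0) (i, 0)) + Complex.normSq (R (i, 0) (i, 1)) := by
      simp [hg, Fin.sum_univ_two, Complex.sq_norm]
    rw [this]
    have hci : c⁻¹ = (1 / ‖p.2‖) ^ 2 := by
      rw [hc, ← Complex.sq_norm]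
      field_simp
    calc Real.sqrt (Complex.normSq (R (i, 0) (i, 0)) + Complex.normSq (R (i, 0) (i, 1)))
        ≤ Real.sqrt (c⁻¹) := Real.sqrt_le_sqrt (row i)
      _ = 1 / ‖p.2‖ := by
          rw [hci, Real.sqrt_sq (by positivity)]
  set w : EuclideanSpace ℂ (Fin 2) := (N : ℂ)⁻¹ • ∑ i : Fin N, g i with hw
  have hwbound : ‖w‖ ≤ 1 / ‖p.2‖ := by
    have hNpos : (0 : ℝ) < N := by exact_mod_cast hN
    calc ‖w‖ = ‖(N : ℂ)⁻¹‖ * ‖∑ i : Fin N, g i‖ := norm_smul _ _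
      _ ≤ ‖(N : ℂ)⁻¹‖ * ∑ i : Fin N, ‖g i‖ := by
          gcongr
          exact norm_sum_le _ _
      _ ≤ (N : ℝ)⁻¹ * (N * (1 / ‖p.2‖)) := by
          rw [norm_inv, Complex.norm_natCast]
          gcongr
          calc ∑ i : Fin N, ‖g i‖ ≤ ∑ _i : Fin N, (1 / ‖p.2‖) :=
                Finset.sum_le_sum fun i _ => hgnorm i
            _ = N * (1 / ‖p.2‖) := by simp [Finset.sum_const, mul_comm]
      _ = 1 / ‖p.2‖ := by field_simp
  -- identify qnorm (qGreen p X) with ‖w‖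
  have hq : qnorm (qGreen p X) = ‖w‖ := by
    have hs0 : (∑ i : Fin N, g i) 0 = ∑ i : Fin N, g i 0 :=
      by rw [WithLp.ofLp_sum, Finset.sum_apply]
    have hs1 : (∑ i : Fin N, g i) 1 = ∑ i : Fin N, g i 1 :=
      by rw [WithLp.ofLp_sum, Finset.sum_apply]
    have hw0 : w 0 = (N : ℂ)⁻¹ * ∑ i : Fin N, R (i, 0) (i, 0) := by
      rw [hw, PiLp.smul_apply, hs0, smul_eq_mul]
      simp [hg, WithLp.equiv_symm_apply, PiLp.toLp_apply]
    have hw1 : w 1 = (N : ℂ)⁻¹ * ∑ i : Fin N, R (i, 0) (i, 1) := by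
      rw [hw, PiLp.smul_apply, hs1, smul_eq_mul]
      simp [hg, WithLp.equiv_symm_apply, PiLp.toLp_apply]
    rw [EuclideanSpace.norm_eq, Fin.sum_univ_two]
    rw [qnorm, qGreen]
    simp only [← hM, ← hR, hw0, hw1]
    congr 1
    simp [_root_.map_mul]
  rw [hq]
  exact hwbound
end
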